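/- arXiv:1702.00827 — 2 statements merged into one kernel-verified Lean document; each statement's English description precedes it below -/
import Mathlib

section
/- Let n ≥ 1 and let B, C be n×n complex Hermitian matrices such that B is positive semidefinite, C is positive semidefinite, and C has rank at most 1. Set A := B − C (which is Hermitian). Then the sum of the absolute values of the eigenvalues of A satisfies ∑_{i} |λ_i(A)| ≤ trace(A) + 2 ( ∑_{i,j} |A_{ij}|² )^{1/2}, i.e. the trace norm of A is at most its trace plus twice its Frobenius (Hilbert–Schmidt) norm. In particular, if trace(B) = trace(C) then ∑_{i} |λ_i(A)| ≤ 2 ( ∑_{i,j} |A_{ij}|² )^{1/2}. -/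
open Matrix BigOperators
open scoped ComplexOrder

section aux
variable {n : ℕ} {A : Matrix (Fin n) (Fin n) ℂ} (hA : A.IsHermitian)

lemma aux_trace_eq_sum : A.trace = ∑ i, (hA.eigenvalues i : ℂ) := by
  conv_lhs => rw [hA.spectral_theorem, Unitary.conjStarAlgAut_apply]
  rw [Matrix.trace_mul_cycle,
    (Matrix.mem_unitaryGroup_iff'.mp (hA.eigenvectorUnitary).2), one_mul,
    Matrix.trace_diagonal]
  rfl

lemma aux_sum_sq : ∑ i, (hA.eigenvalues i) ^ 2 = ∑ i, ∑ j, ‖A i j‖ ^ 2 := by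
  have h2 : Aᴴ * A = (hA.eigenvectorUnitary : Matrix (Fin n) (Fin n) ℂ) *
      diagonal (fun i => ((hA.eigenvalues i : ℂ)) ^ 2) *
      (star (hA.eigenvectorUnitary : Matrix (Fin n) (Fin n) ℂ)) := by
    rw [show Aᴴ = A from hA]
    conv_lhs => rw [hA.spectral_theorem, Unitary.conjStarAlgAut_apply]
    rw [show ∀ (U D : Matrix (Fin n) (Fin n) ℂ), (U * D * star U) * (U * D * star U)
        = U * (D * (star U * U) * D) * star U from fun U D => by
          noncomm_ring,
      (Matrix.mem_unitaryGroup_iff'.mp (hA.eigenvectorUnitary).2), mul_one,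
      Matrix.diagonal_mul_diagonal]
    congr 1
    · congr 1
      funext i
      simp [sq]
  have h3 : (Aᴴ * A).trace = ∑ i, ((hA.eigenvalues i : ℂ)) ^ 2 := by
    rw [h2, Matrix.trace_mul_cycle,
      (Matrix.mem_unitaryGroup_iff'.mp (hA.eigenvectorUnitary).2), one_mul,
      Matrix.trace_diagonal]
  have h1 : (Aᴴ * A).trace = ((∑ i, ∑ j, ‖A j i‖ ^ 2 : ℝ) : ℂ) := by
    simp only [Matrix.trace, Matrix.diag, Matrix.mul_apply, Matrix.conjTranspose_apply]
    push_cast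
    congr 1; funext i; congr 1; funext j
    rw [RCLike.star_def, mul_comm, Complex.mul_conj, Complex.normSq_eq_norm_sq]
    norm_cast
  have h4 : ((∑ i, (hA.eigenvalues i) ^ 2 : ℝ) : ℂ) = ((∑ i, ∑ j, ‖A j i‖ ^ 2 : ℝ) : ℂ) := by
    rw [← h1, h3]
    push_cast
    rfl
  have h5 := Complex.ofReal_inj.mp h4
  rw [h5, Finset.sum_comm]

end aux

/-- If `A = B - C` with `B, C` Hermitian positive semidefinite and `C` of rank at most
one, then the trace norm of `A` is at most its trace plus twice its Frobenius norm; in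
particular, if `trace B = trace C` the trace norm is bounded by twice the Frobenius
norm. -/
theorem traceNorm_le_trace_add_two_frobenius
    (n : ℕ) (hn : 1 ≤ n) (B C : Matrix (Fin n) (Fin n) ℂ)
    (hB : B.PosSemidef) (hC : C.PosSemidef) (hrank : C.rank ≤ 1)
    (hA : (B - C).IsHermitian) :
    (∑ i, |hA.eigenvalues i|
        ≤ ((B - C).trace).re
          + 2 * Real.sqrt (∑ i, ∑ j, ‖(B - C) i j‖ ^ 2)) ∧
      (B.trace = C.trace →
        ∑ i, |hA.eigenvalues i| ≤ 2 * Real.sqrt (∑ i, ∑ j, ‖(B - C) i j‖ ^ 2)) := by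
  set lam := hA.eigenvalues with hlam
  set S := Real.sqrt (∑ i, ∑ j, ‖(B - C) i j‖ ^ 2) with hSdef
  have hS0 : 0 ≤ S := Real.sqrt_nonneg _
  have htr : ((B - C).trace).re = ∑ i, lam i := by
    rw [aux_trace_eq_sum hA]
    simp
    rfl
  have hSbound : ∀ i, |lam i| ≤ S := by
    intro i
    rw [← Real.sqrt_sq_eq_abs]
    apply Real.sqrt_le_sqrt
    rw [← aux_sum_sq hA]
    exact Finset.single_le_sum (f := fun i => lam i ^ 2)
      (fun j _ => sq_nonneg _) (Finset.mem_univ i)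
  -- at most one negative eigenvalue
  have hkey : ∀ i j, lam i < 0 → lam j < 0 → i = j := by
    intro i j hi hj
    by_contra hij
    set v : Fin n → ℂ := ⇑(hA.eigenvectorBasis i) with hv
    set w : Fin n → ℂ := ⇑(hA.eigenvectorBasis j) with hw
    have hdep : ¬ LinearIndependent ℂ ![C *ᵥ v, C *ᵥ w] := by
      intro hLI
      have hle : Submodule.span ℂ (Set.range ![C *ᵥ v, C *ᵥ w])
          ≤ LinearMap.range C.mulVecLin := by
        rw [Submodule.span_le]
        rintro y ⟨k, rfl⟩
        fin_cases k
        · exact ⟨v, rfl⟩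
        · exact ⟨w, rfl⟩
      have h2 := Submodule.finrank_mono hle
      rw [finrank_span_eq_card hLI] at h2
      simp only [Fintype.card_fin] at h2
      rw [Matrix.rank] at hrank
      omega
    rw [LinearIndependent.pair_iff] at hdep
    push_neg at hdep
    obtain ⟨s, t, hst, hne⟩ := hdep
    set x := s • v + t • w with hx
    have hCx : C *ᵥ x = 0 := by
      simp only [hx, Matrix.mulVec_add, Matrix.mulVec_smul]
      exact hst
    have horth := hA.eigenvectorBasis.orthonormal
    rw [orthonormal_iff_ite] at horth
    have hvv : star v ⬝ᵥ v = 1 := by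
      have h := horth i i
      rw [if_pos rfl, EuclideanSpace.inner_eq_star_dotProduct] at h
      rw [dotProduct_comm] at h
      exact h
    have hww : star w ⬝ᵥ w = 1 := by
      have h := horth j j
      rw [if_pos rfl, EuclideanSpace.inner_eq_star_dotProduct] at h
      rw [dotProduct_comm] at h
      exact h
    have hvw : star v ⬝ᵥ w = 0 := by
      have h := horth i j
      rw [if_neg hij, EuclideanSpace.inner_eq_star_dotProduct] at h
      rw [dotProduct_comm] at h
      exact h
    have hwv : star w ⬝ᵥ v = 0 := by
      have h := horth j i
      rw [if_neg (Ne.symm hij), EuclideanSpace.inner_eq_star_dotProduct] at h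
      rw [dotProduct_comm] at h
      exact h
    have hAv : (B - C) *ᵥ v = (lam i : ℂ) • v := by
      have := hA.mulVec_eigenvectorBasis i
      rw [← hv] at this
      rw [this]
      ext k
      simp [Complex.real_smul, hlam]
    have hAw : (B - C) *ᵥ w = (lam j : ℂ) • w := by
      have := hA.mulVec_eigenvectorBasis j
      rw [← hw] at this
      rw [this]
      ext k
      simp [Complex.real_smul, hlam]
    have hval : star x ⬝ᵥ ((B - C) *ᵥ x)
        = ((Complex.normSq s * lam i + Complex.normSq t * lam j : ℝ) : ℂ) := by
      simp only [hx, Matrix.mulVec_add, Matrix.mulVec_smul, hAv, hAw, star_add, star_smul,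
        add_dotProduct, dotProduct_add, smul_dotProduct,
        dotProduct_smul, hvv, hvw, hwv, hww, smul_eq_mul, mul_one, mul_zero,
        add_zero, zero_add]
      push_cast [Complex.normSq_eq_conj_mul_self]
      simp only [RCLike.star_def]
      ring
    have hpos : (0 : ℝ) ≤ Complex.normSq s * lam i + Complex.normSq t * lam j := by
      have hb := hB.dotProduct_mulVec_nonneg x
      have h0 : star x ⬝ᵥ ((B - C) *ᵥ x) = star x ⬝ᵥ (B *ᵥ x) := by
        rw [Matrix.sub_mulVec, dotProduct_sub, hCx, dotProduct_zero, sub_zero]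
      rw [← h0, hval] at hb
      exact_mod_cast hb
    by_cases hs : s = 0
    · have h1 : 0 < Complex.normSq t := Complex.normSq_pos.mpr (hne hs)
      nlinarith [Complex.normSq_nonneg s]
    · have h1 : 0 < Complex.normSq s := Complex.normSq_pos.mpr hs
      nlinarith [Complex.normSq_nonneg t]
  have main : ∑ i, |lam i| ≤ ((B - C).trace).re + 2 * S := by
    rw [htr]
    by_cases hneg : ∃ i, lam i < 0
    · obtain ⟨i0, hi0⟩ := hneg
      have hpos : ∀ i, i ≠ i0 → 0 ≤ lam i :=
        fun i hi => le_of_not_gt fun h => hi (hkey i i0 h hi0)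
      have hsum : ∑ i, (|lam i| - lam i) = |lam i0| - lam i0 := by
        apply Finset.sum_eq_single
        · intro k _ hk
          rw [abs_of_nonneg (hpos k hk), sub_self]
        · intro h; exact absurd (Finset.mem_univ i0) h
      have heq : ∑ i, |lam i| = ∑ i, lam i + (|lam i0| - lam i0) := by
        rw [← hsum, Finset.sum_sub_distrib]
        ring
      rw [heq]
      have : |lam i0| - lam i0 = 2 * |lam i0| := by
        rw [abs_of_neg hi0]; ring
      rw [this]
      have := hSbound i0
      linarith
    · push_neg at hneg
      have : ∑ i, |lam i| = ∑ i, lam i := by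
        apply Finset.sum_congr rfl
        intro i _
        exact abs_of_nonneg (hneg i)
      rw [this]
      linarith
  refine ⟨main, fun htreq => ?_⟩
  have : (B - C).trace = 0 := by
    rw [Matrix.trace_sub, htreq, sub_self]
  rw [this] at main
  simpa using main
end

section
/- Let m, q be nonempty finite types and let ρ be a Hermitian complex matrix indexed by (m × q) × (m × q). Define its partial trace over the second factor as the m × m matrix σ with entries σ(i, j) := ∑_{k ∈ q} ρ((i, k), (j, k)); then σ is Hermitian and the sum of the absolute values of the eigenvalues of σ is at most the sum of the absolute values of the eigenvalues of ρ: ∑_i |λ_i(σ)| ≤ ∑_i |λ_i(ρ)|. (This is the finite-dimensional form of the statement that the trace norm of a partial trace of a trace class operator is bounded by the trace norm of the operator.) -/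
open Matrix BigOperators

private lemma sum_swap3 {α β γ M : Type*} [AddCommMonoid M]
    (s : Finset α) (t : Finset β) (u : Finset γ) (f : α → β → γ → M) :
    ∑ a ∈ s, ∑ b ∈ t, ∑ c ∈ u, f a b c = ∑ c ∈ u, ∑ a ∈ s, ∑ b ∈ t, f a b c := by
  calc ∑ a ∈ s, ∑ b ∈ t, ∑ c ∈ u, f a b c
      = ∑ a ∈ s, ∑ c ∈ u, ∑ b ∈ t, f a b c :=
        Finset.sum_congr rfl fun _ _ => Finset.sum_comm
    _ = ∑ c ∈ u, ∑ a ∈ s, ∑ b ∈ t, f a b c := Finset.sum_comm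

/-- The trace norm of the partial trace of a Hermitian matrix on a finite-dimensional
tensor product is bounded by the trace norm of the matrix. -/
theorem traceNorm_partialTrace_le
    (m q : Type*) [Fintype m] [Fintype q] [DecidableEq m] [DecidableEq q]
    [Nonempty m] [Nonempty q]
    (ρ : Matrix (m × q) (m × q) ℂ) (hρ : ρ.IsHermitian) :
    ∃ hσ : (Matrix.of fun i j : m => ∑ k : q, ρ (i, k) (j, k)).IsHermitian,
      ∑ i, |hσ.eigenvalues i| ≤ ∑ i, |hρ.eigenvalues i| := by
  set σ : Matrix m m ℂ := Matrix.of fun i j : m => ∑ k : q, ρ (i, k) (j, k) with hσdef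
  have hσ : σ.IsHermitian := by
    ext i j
    simp only [conjTranspose_apply, hσdef, of_apply, star_sum]
    exact Finset.sum_congr rfl fun k _ => hρ.apply (i, k) (j, k)
  refine ⟨hσ, ?_⟩
  set W : Matrix m m ℂ := (hσ.eigenvectorUnitary : Matrix m m ℂ) with hWdef
  set V : Matrix (m × q) (m × q) ℂ :=
    (hρ.eigenvectorUnitary : Matrix (m × q) (m × q) ℂ) with hVdef
  -- unitarity facts
  have hWW : ∀ a b : m, ∑ i, W a i * star (W b i) = if a = b then 1 else 0 := by
    intro a b
    have h : W * star W = 1 := mem_unitaryGroup_iff.mp hσ.eigenvectorUnitary.2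
    have := congrArg (fun M => M a b) h
    simpa [mul_apply, Matrix.star_apply, one_apply] using this
  have hVV : ∀ j : m × q, ∑ x, star (V x j) * V x j = 1 := by
    intro j
    have h : star V * V = 1 := mem_unitaryGroup_iff'.mp hρ.eigenvectorUnitary.2
    have := congrArg (fun M => M j j) h
    simpa [mul_apply, Matrix.star_apply, one_apply] using this
  -- entrywise spectral decomposition of ρ
  have hρe : ∀ x y : m × q,
      ρ x y = ∑ j, (hρ.eigenvalues j : ℂ) * (V x j * star (V y j)) := by
    intro x y
    have := congrArg (fun M => M x y) (show ρ = (hρ.eigenvectorUnitary : Matrix (m × q) (m × q) ℂ) *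
      diagonal (RCLike.ofReal ∘ hρ.eigenvalues) * star (hρ.eigenvectorUnitary : Matrix (m × q) (m × q) ℂ)
      from hρ.spectral_theorem)
    simp only [mul_apply, diagonal_apply, Function.comp_apply, Matrix.star_apply,
      mul_ite, mul_zero, Finset.sum_ite_eq', Finset.mem_univ, if_true] at this
    rw [← hVdef] at this
    have this' : ρ x y = ∑ j, V x j * ((hρ.eigenvalues j : ℂ)) * star (V y j) := this
    rw [this']
    refine Finset.sum_congr rfl fun j _ => by ring
  -- eigenvalue of σ as a quadratic form
  have hEig : ∀ i : m, ((hσ.eigenvalues i : ℂ)) =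
      ∑ a, ∑ b, star (W a i) * σ a b * W b i := by
    intro i
    have h0 := congrArg (fun M => M i i) (show star (hσ.eigenvectorUnitary : Matrix m m ℂ) * σ *
      (hσ.eigenvectorUnitary : Matrix m m ℂ) = diagonal (RCLike.ofReal ∘ hσ.eigenvalues) from by
        have h := hσ.conjStarAlgAut_star_eigenvectorUnitary
        rw [Unitary.conjStarAlgAut_apply] at h
        simpa only [Unitary.coe_star, star_star] using h)
    simp only [mul_apply, diagonal_apply_eq, Function.comp_apply, Matrix.star_apply] at h0
    rw [← hWdef] at h0
    have h1 : ((hσ.eigenvalues i : ℂ)) = ∑ x, (∑ y, star (W y i) * σ y x) * W x i := by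
      exact_mod_cast h0.symm
    rw [h1]
    simp only [Finset.sum_mul]
    rw [Finset.sum_comm]
  -- overlap coefficients
  set c : (m × q) → m → q → ℂ := fun j i k => ∑ a, star (W a i) * V (a, k) j with hcdef
  have hcc : ∀ (j : m × q) (i : m) (k : q),
      ((Complex.normSq (c j i k) : ℂ)) = c j i k * star (c j i k) := by
    intro j i k
    rw [Complex.star_def]
    exact (Complex.mul_conj _).symm
  -- key identity: eigenvalues of σ as combinations of eigenvalues of ρ
  have key : ∀ i : m, hσ.eigenvalues i =
      ∑ k, ∑ j, hρ.eigenvalues j * Complex.normSq (c j i k) := by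
    intro i
    have hC : ((hσ.eigenvalues i : ℂ)) =
        ∑ k, ∑ j, (hρ.eigenvalues j : ℂ) * (Complex.normSq (c j i k) : ℂ) := by
      rw [hEig i]
      have step1 : ∑ a, ∑ b, star (W a i) * σ a b * W b i =
          ∑ k : q, ∑ a, ∑ b, star (W a i) * ρ (a, k) (b, k) * W b i := by
        rw [← sum_swap3]
        refine Finset.sum_congr rfl fun a _ => Finset.sum_congr rfl fun b _ => ?_
        simp only [hσdef, of_apply, Finset.sum_mul, Finset.mul_sum]
      rw [step1]
      refine Finset.sum_congr rfl fun k _ => ?_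
      have step2 : ∑ a, ∑ b, star (W a i) * ρ (a, k) (b, k) * W b i =
          ∑ j, ∑ a, ∑ b, star (W a i) *
            ((hρ.eigenvalues j : ℂ) * (V (a, k) j * star (V (b, k) j))) * W b i := by
        rw [← sum_swap3]
        refine Finset.sum_congr rfl fun a _ => Finset.sum_congr rfl fun b _ => ?_
        rw [hρe (a, k) (b, k)]
        simp only [Finset.sum_mul, Finset.mul_sum]
      rw [step2]
      refine Finset.sum_congr rfl fun j _ => ?_
      rw [hcc j i k]
      simp only [hcdef, star_sum, star_mul', star_star, Finset.mul_sum, Finset.sum_mul]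
      rw [Finset.sum_comm]
      exact Finset.sum_congr rfl fun a _ => Finset.sum_congr rfl fun b _ => by ring
    have hC' : ((hσ.eigenvalues i : ℂ)) =
        ((∑ k, ∑ j, hρ.eigenvalues j * Complex.normSq (c j i k) : ℝ) : ℂ) := by
      rw [hC]; push_cast; rfl
    exact_mod_cast hC'
  -- normalization: for each j the weights sum to 1
  have norm1 : ∀ j : m × q, ∑ i : m, ∑ k : q, Complex.normSq (c j i k) = 1 := by
    intro j
    have hC : (∑ i : m, ∑ k : q, ((Complex.normSq (c j i k) : ℂ))) = 1 := by
      have expand : ∀ (i : m) (k : q), ((Complex.normSq (c j i k) : ℂ)) =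
          ∑ a, ∑ b, (star (W a i) * V (a, k) j) * (W b i * star (V (b, k) j)) := by
        intro i k
        rw [hcc j i k]
        simp only [hcdef, star_sum, star_mul', star_star, Finset.mul_sum, Finset.sum_mul]
        rw [Finset.sum_comm]
      calc (∑ i : m, ∑ k : q, ((Complex.normSq (c j i k) : ℂ)))
          = ∑ i : m, ∑ k : q, ∑ a, ∑ b,
              (star (W a i) * V (a, k) j) * (W b i * star (V (b, k) j)) :=
            Finset.sum_congr rfl fun i _ => Finset.sum_congr rfl fun k _ => expand i k
        _ = ∑ k : q, ∑ i : m, ∑ a, ∑ b,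
              (star (W a i) * V (a, k) j) * (W b i * star (V (b, k) j)) := Finset.sum_comm
        _ = ∑ k : q, ∑ a, ∑ b, ∑ i : m,
              (star (W a i) * V (a, k) j) * (W b i * star (V (b, k) j)) :=
            Finset.sum_congr rfl fun k _ => (sum_swap3 _ _ _ _).symm
        _ = ∑ k : q, ∑ a, ∑ b,
              (V (a, k) j * star (V (b, k) j)) * ∑ i : m, W b i * star (W a i) := by
            refine Finset.sum_congr rfl fun k _ => Finset.sum_congr rfl fun a _ =>
              Finset.sum_congr rfl fun b _ => ?_
            rw [Finset.mul_sum]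
            exact Finset.sum_congr rfl fun i _ => by ring
        _ = ∑ k : q, ∑ a, V (a, k) j * star (V (a, k) j) := by
            refine Finset.sum_congr rfl fun k _ => Finset.sum_congr rfl fun a _ => ?_
            have : ∀ b : m, (V (a, k) j * star (V (b, k) j)) *
                (∑ i : m, W b i * star (W a i)) =
                if b = a then V (a, k) j * star (V (a, k) j) else 0 := by
              intro b
              rw [hWW b a]
              by_cases h : b = a <;> simp [h]
            rw [Finset.sum_congr rfl fun b _ => this b]
            simp
        _ = ∑ x : m × q, V x j * star (V x j) := by
            rw [Finset.sum_comm]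
            exact (Fintype.sum_prod_type (f := fun x : m × q => V x j * star (V x j))).symm
        _ = 1 := by
            rw [← hVV j]
            exact Finset.sum_congr rfl fun x _ => by ring
    have hC' : ((∑ i : m, ∑ k : q, Complex.normSq (c j i k) : ℝ) : ℂ) = ((1 : ℝ) : ℂ) := by
      push_cast
      rw [hC]
    exact_mod_cast hC'
  -- conclude
  calc ∑ i, |hσ.eigenvalues i|
      = ∑ i, |∑ k, ∑ j, hρ.eigenvalues j * Complex.normSq (c j i k)| := by
        refine Finset.sum_congr rfl fun i _ => by rw [key i]
    _ ≤ ∑ i, ∑ k, ∑ j, |hρ.eigenvalues j| * Complex.normSq (c j i k) := by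
        refine Finset.sum_le_sum fun i _ => ?_
        refine (Finset.abs_sum_le_sum_abs _ _).trans ?_
        refine Finset.sum_le_sum fun k _ => ?_
        refine (Finset.abs_sum_le_sum_abs _ _).trans ?_
        refine Finset.sum_le_sum fun j _ => ?_
        rw [abs_mul, abs_of_nonneg (Complex.normSq_nonneg _)]
    _ = ∑ j, ∑ i, ∑ k, |hρ.eigenvalues j| * Complex.normSq (c j i k) := sum_swap3 _ _ _ _
    _ = ∑ j, |hρ.eigenvalues j| * ∑ i, ∑ k, Complex.normSq (c j i k) := by
        refine Finset.sum_congr rfl fun j _ => ?_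
        simp only [Finset.mul_sum]
    _ = ∑ j, |hρ.eigenvalues j| := by
        refine Finset.sum_congr rfl fun j _ => by rw [norm1 j, mul_one]
end
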